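/- arXiv:2005.13339 — 14 statements merged into one kernel-verified Lean document; each statement's English description precedes it below -/
import Mathlib

section
/- (Merkle root binding; core of the paper's non-equivocation and consistency arguments) Assume the hashing is collision-free. Then for every k : ℕ and all lists X, Y : List α with X.length = 2^k and Y.length = 2^k, if MkRoot k X = MkRoot k Y then X = Y. -/
variable {α β : Type*}

/-- Merkle root of a list of length `2^k` (junk value otherwise). -/
def MkRoot [Inhabited α] (ℓ : α → β) (h : β → β → β) : ℕ → List α → β
  | 0, X => ℓ X.headI
  | k + 1, X => h (MkRoot ℓ h k (X.take (2 ^ k))) (MkRoot ℓ h k (X.drop (2 ^ k)))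

theorem merkle_root_binding [Inhabited α] (ℓ : α → β) (h : β → β → β)
    (hℓ : Function.Injective ℓ)
    (hh : ∀ b₁ b₂ b₁' b₂' : β, h b₁ b₂ = h b₁' b₂' → b₁ = b₁' ∧ b₂ = b₂')
    (k : ℕ) (X Y : List α) (hX : X.length = 2 ^ k) (hY : Y.length = 2 ^ k)
    (hroot : MkRoot ℓ h k X = MkRoot ℓ h k Y) : X = Y := by
  induction k generalizing X Y with
  | zero =>
    simp only [pow_zero, List.length_eq_one_iff] at hX hY
    obtain ⟨x, rfl⟩ := hX; obtain ⟨y, rfl⟩ := hY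
    simp only [MkRoot, List.headI] at hroot
    rw [hℓ hroot]
  | succ k ih =>
    simp only [MkRoot] at hroot
    obtain ⟨h1, h2⟩ := hh _ _ _ _ hroot
    have hx : X.length = 2 ^ k + 2 ^ k := by rw [hX]; ring
    have hy : Y.length = 2 ^ k + 2 ^ k := by rw [hY]; ring
    have e1 := ih _ _ (by simp [List.length_take]; omega) (by simp [List.length_take]; omega) h1
    have e2 := ih _ _ (by simp [List.length_drop]; omega) (by simp [List.length_drop]; omega) h2
    rw [← List.take_append_drop (2 ^ k) X, ← List.take_append_drop (2 ^ k) Y, e1, e2]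
end

section
/- (Completeness of Merkle membership proofs with logarithmic size) For every k : ℕ, every list X : List α with X.length = 2^k, and every index i < 2^k, the authentication path MkProof k i X has length exactly k, and it verifies the i-th element of X against the Merkle root of X; that is, Rec k i (X.get i) (MkProof k i X) = MkRoot k X. -/
variable {α β : Type*}

/-- Root reconstruction from an authentication path, listed from the root
level down to the leaf level (junk value on ill-formed input). -/
def Rec (ℓ : α → β) (h : β → β → β) : ℕ → ℕ → α → List β → β
  | 0, _, x, _ => ℓ x
  | _ + 1, _, x, [] => ℓ x
  | k + 1, i, x, s :: π =>
    if i < 2 ^ k then h (Rec ℓ h k i x π) s else h s (Rec ℓ h k (i - 2 ^ k) x π)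

/-- Authentication path for index `i` in a list of length `2^k`. -/
def MkProof [Inhabited α] (ℓ : α → β) (h : β → β → β) : ℕ → ℕ → List α → List β
  | 0, _, _ => []
  | k + 1, i, X =>
    if i < 2 ^ k then MkRoot ℓ h k (X.drop (2 ^ k)) :: MkProof ℓ h k i (X.take (2 ^ k))
    else MkRoot ℓ h k (X.take (2 ^ k)) :: MkProof ℓ h k (i - 2 ^ k) (X.drop (2 ^ k))

theorem merkle_proof_complete [Inhabited α] (ℓ : α → β) (h : β → β → β)
    (k : ℕ) (X : List α) (hX : X.length = 2 ^ k) (i : ℕ) (hi : i < 2 ^ k) :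
    (MkProof ℓ h k i X).length = k ∧
      Rec ℓ h k i (X.get ⟨i, by omega⟩) (MkProof ℓ h k i X) = MkRoot ℓ h k X := by
  induction k generalizing X i with
  | zero =>
    interval_cases i
    simp [MkProof, Rec, MkRoot, List.get]
    cases X with
    | nil => simp at hX
    | cons a t => simp
  | succ k ih =>
    have hlen : (X.take (2 ^ k)).length = 2 ^ k := by
      simp [hX]; rw [pow_succ]; omega
    have hlend : (X.drop (2 ^ k)).length = 2 ^ k := by
      simp [hX]; rw [pow_succ]; omega
    by_cases hcase : i < 2 ^ k
    · obtain ⟨h1, h2⟩ := ih (X.take (2 ^ k)) hlen i hcase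
      have hget : X.get ⟨i, by omega⟩ = (X.take (2 ^ k)).get ⟨i, by omega⟩ := by
        simp [List.getElem_take]
      constructor
      · simp [MkProof, hcase, h1]
      · simp only [MkProof, hcase, if_true, Rec, MkRoot]
        rw [hget, h2]
    · have hi' : i - 2 ^ k < 2 ^ k := by rw [pow_succ] at hi; omega
      obtain ⟨h1, h2⟩ := ih (X.drop (2 ^ k)) hlend (i - 2 ^ k) hi'
      have hget : X.get ⟨i, by omega⟩ = (X.drop (2 ^ k)).get ⟨i - 2 ^ k, by omega⟩ := by
        simp [List.getElem_drop]
        congr 1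
        omega
      constructor
      · simp [MkProof, hcase, h1]
      · simp only [MkProof, hcase, if_false, Rec]
        rw [hget, h2]
        rfl
end

section
/- (Soundness of Merkle membership proofs) Assume the hashing is collision-free. Let k : ℕ, let X : List α with X.length = 2^k, let i < 2^k, let x : α, and let π : List β with π.length = k. If π verifies (i, x) against MkRoot k X (i.e., Rec k i x π = MkRoot k X), then x = X.get i. -/
variable {α β : Type*}

theorem merkle_proof_sound [Inhabited α] (ℓ : α → β) (h : β → β → β)
    (hℓ : Function.Injective ℓ)
    (hh : ∀ b₁ b₂ b₁' b₂' : β, h b₁ b₂ = h b₁' b₂' → b₁ = b₁' ∧ b₂ = b₂')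
    (k : ℕ) (X : List α) (hX : X.length = 2 ^ k) (i : ℕ) (hi : i < 2 ^ k)
    (x : α) (π : List β) (hπ : π.length = k)
    (hver : Rec ℓ h k i x π = MkRoot ℓ h k X) : x = X.get ⟨i, by omega⟩ := by
  induction k generalizing X i π with
  | zero =>
    interval_cases i
    simp [Rec, MkRoot] at hver
    have := hℓ hver
    subst this
    cases X with
    | nil => simp at hX
    | cons a t => simp [List.headI]
  | succ k ih =>
    cases π with
    | nil => simp at hπ
    | cons s π' =>
      simp at hπ
      rw [MkRoot] at hver
      by_cases hcase : i < 2 ^ k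
      · rw [Rec, if_pos hcase] at hver
        have h1 := (hh _ _ _ _ hver).1
        have hlen : (X.take (2 ^ k)).length = 2 ^ k := by
          simp [hX]; rw [pow_succ]; omega
        have := ih (X.take (2 ^ k)) hlen i hcase π' hπ h1
        rw [this]
        simp only [List.get_eq_getElem, List.getElem_take]
      · rw [Rec, if_neg hcase] at hver
        have h2 := (hh _ _ _ _ hver).2
        have hi' : i - 2 ^ k < 2 ^ k := by rw [pow_succ] at hi; omega
        have hlen : (X.drop (2 ^ k)).length = 2 ^ k := by
          simp [hX]; rw [pow_succ]; omega
        have := ih (X.drop (2 ^ k)) hlen _ hi' π' hπ h2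
        rw [this]
        simp only [List.get_eq_getElem, List.getElem_drop]
        congr 1
        omega
end

section
/- (No forgery of Merkle proofs for a modified element; core of the paper's verifiability argument that a membership proof for a modified or deleted transaction cannot be forged) Assume the hashing is collision-free. Let k : ℕ, let i < 2^k, let x, x' : α, and let π, π' : List β with π.length = k and π'.length = k. If Rec k i x π = Rec k i x' π' (i.e., both authentication paths reconstruct the same root for the same index i), then x = x'. -/
variable {α β : Type*}

theorem merkle_no_forgery (ℓ : α → β) (h : β → β → β)
    (hℓ : Function.Injective ℓ)
    (hh : ∀ b₁ b₂ b₁' b₂' : β, h b₁ b₂ = h b₁' b₂' → b₁ = b₁' ∧ b₂ = b₂')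
    (k : ℕ) (i : ℕ) (hi : i < 2 ^ k) (x x' : α) (π π' : List β)
    (hπ : π.length = k) (hπ' : π'.length = k)
    (heq : Rec ℓ h k i x π = Rec ℓ h k i x' π') : x = x' := by
  induction k generalizing i π π' with
  | zero => exact hℓ heq
  | succ k ih =>
    match π, π' with
    | s :: π, s' :: π' =>
      simp only [List.length_cons, Nat.succ.injEq] at hπ hπ'
      by_cases hik : i < 2 ^ k
      · simp only [Rec, if_pos hik] at heq
        exact ih i hik π π' hπ hπ' (hh _ _ _ _ heq).1
      · simp only [Rec, if_neg hik] at heq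
        have : i - 2 ^ k < 2 ^ k := by
          have := Nat.two_pow_succ k
          omega
        exact ih _ this π π' hπ hπ' (hh _ _ _ _ heq).2
end

section
/- (Uniqueness of authentication paths) Assume the hashing is collision-free. Let k : ℕ, let X : List α with X.length = 2^k, let i < 2^k, let x : α, and let π : List β with π.length = k. If Rec k i x π = MkRoot k X, then π = MkProof k i X. -/
variable {α β : Type*}

theorem merkle_path_unique [Inhabited α] (ℓ : α → β) (h : β → β → β)
    (hℓ : Function.Injective ℓ)
    (hh : ∀ b₁ b₂ b₁' b₂' : β, h b₁ b₂ = h b₁' b₂' → b₁ = b₁' ∧ b₂ = b₂')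
    (k : ℕ) (X : List α) (hX : X.length = 2 ^ k) (i : ℕ) (hi : i < 2 ^ k)
    (x : α) (π : List β) (hπ : π.length = k)
    (hver : Rec ℓ h k i x π = MkRoot ℓ h k X) : π = MkProof ℓ h k i X := by
  induction k generalizing X i π with
  | zero =>
    rw [List.length_eq_zero_iff] at hπ
    subst hπ
    simp [MkProof]
  | succ k ih =>
    obtain ⟨s, π', rfl⟩ : ∃ s π', π = s :: π' := by
      cases π with
      | nil => simp at hπ
      | cons a b => exact ⟨a, b, rfl⟩
    simp only [List.length_cons, Nat.succ_inj] at hπ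
    have htake : (X.take (2 ^ k)).length = 2 ^ k := by
      simp [hX, pow_succ, two_mul]
    have hdrop : (X.drop (2 ^ k)).length = 2 ^ k := by
      simp [hX, pow_succ, two_mul]; omega
    rw [MkProof]
    simp only [Rec, MkRoot] at hver
    by_cases hik : i < 2 ^ k
    · rw [if_pos hik] at hver ⊢
      obtain ⟨h1, h2⟩ := hh _ _ _ _ hver
      rw [h2, ih _ htake _ hik _ hπ h1]
    · rw [if_neg hik] at hver ⊢
      obtain ⟨h1, h2⟩ := hh _ _ _ _ hver
      have : i - 2 ^ k < 2 ^ k := by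
        omega
      rw [h1, ih _ hdrop _ this _ hπ h2]
end

section
/- (Completeness of incremental consistency proofs between two versions of the history tree) Let a ≤ b be natural numbers and let X : List α with X.length = 2^b. Then there exists a list S : List β with S.length = b - a such that S.foldl h (MkRoot a (X.take 2^a)) = MkRoot b X; moreover, one may take S to be the list whose j-th entry (for 0 ≤ j < b - a) is MkRoot (a + j) ((X.drop 2^(a+j)).take 2^(a+j)), i.e., the roots of the successive right siblings along the left spine of the tree. -/
variable {α β : Type*}

lemma key_fold [Inhabited α] (ℓ : α → β) (h : β → β → β) (a : ℕ) :
    ∀ b : ℕ, a ≤ b → ∀ X : List α, X.length = 2 ^ b →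
      ((List.range (b - a)).map
        (fun j => MkRoot ℓ h (a + j) ((X.drop (2 ^ (a + j))).take (2 ^ (a + j))))).foldl h
        (MkRoot ℓ h a (X.take (2 ^ a))) = MkRoot ℓ h b X := by
  intro b
  induction b with
  | zero =>
    intro hab X hX
    interval_cases a
    simp only [Nat.sub_self, List.range_zero, List.map_nil, List.foldl_nil]
    cases X <;> rfl
  | succ n ih =>
    intro hab X hX
    rcases eq_or_lt_of_le hab with rfl | hlt
    · simp only [Nat.sub_self, List.range_zero, List.map_nil, List.foldl_nil]
      rw [List.take_of_length_le hX.le]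
    · have han : a ≤ n := Nat.lt_succ_iff.mp hlt
      have hd : n + 1 - a = (n - a) + 1 := by omega
      rw [hd, List.range_succ, List.map_append, List.foldl_append]
      have hY : (X.take (2 ^ n)).length = 2 ^ n := by
        rw [List.length_take, hX]
        exact min_eq_left (Nat.pow_le_pow_right (by norm_num) (by omega))
      have := ih han (X.take (2 ^ n)) hY
      have hmap : (List.range (n - a)).map
          (fun j => MkRoot ℓ h (a + j) (((X.take (2 ^ n)).drop (2 ^ (a + j))).take (2 ^ (a + j))))
          = (List.range (n - a)).map
          (fun j => MkRoot ℓ h (a + j) ((X.drop (2 ^ (a + j))).take (2 ^ (a + j)))) := by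
        apply List.map_congr_left
        intro j hj
        rw [List.mem_range] at hj
        congr 1
        rw [List.drop_take]
        rw [List.take_take]
        congr 1
        have : 2 ^ (a + j) + 2 ^ (a + j) ≤ 2 ^ n := by
          have : 2 ^ (a + j + 1) ≤ 2 ^ n := Nat.pow_le_pow_right (by norm_num) (by omega)
          omega
        omega
      have hstart : (X.take (2 ^ n)).take (2 ^ a) = X.take (2 ^ a) := by
        rw [List.take_take]
        congr 1
        exact min_eq_left (Nat.pow_le_pow_right (by norm_num) han)
      rw [hmap, hstart] at this
      rw [this]
      have hlast : a + (n - a) = n := by omega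
      simp only [List.map_cons, List.map_nil, List.foldl_cons, List.foldl_nil, hlast]
      have hdrop : (X.drop (2 ^ n)).take (2 ^ n) = X.drop (2 ^ n) := by
        apply List.take_of_length_le
        rw [List.length_drop, hX]
        simp [pow_succ]; omega
      rw [hdrop]
      rfl

theorem history_tree_incremental_complete [Inhabited α] (ℓ : α → β) (h : β → β → β)
    (a b : ℕ) (hab : a ≤ b) (X : List α) (hX : X.length = 2 ^ b) :
    ∃ S : List β, S.length = b - a ∧
      S.foldl h (MkRoot ℓ h a (X.take (2 ^ a))) = MkRoot ℓ h b X ∧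
      S = (List.range (b - a)).map
        (fun j => MkRoot ℓ h (a + j) ((X.drop (2 ^ (a + j))).take (2 ^ (a + j)))) := by
  exact ⟨_, by simp, key_fold ℓ h a b hab X hX, rfl⟩
end

section
/- (Soundness of incremental consistency proofs; core of the paper's consistency theorem that the ledger can only be extended, never rewritten) Assume the hashing is collision-free. Let a ≤ b be natural numbers, let X : List α with X.length = 2^a, and let X' : List α with X'.length = 2^b. If there exists a list S : List β with S.length = b - a such that S.foldl h (MkRoot a X) = MkRoot b X', then X = X'.take 2^a; in particular, X is a prefix of X'. -/
variable {α β : Type*}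

lemma MkRoot_inj [Inhabited α] (ℓ : α → β) (h : β → β → β)
    (hℓ : Function.Injective ℓ)
    (hh : ∀ b₁ b₂ b₁' b₂' : β, h b₁ b₂ = h b₁' b₂' → b₁ = b₁' ∧ b₂ = b₂') :
    ∀ k (X Y : List α), X.length = 2 ^ k → Y.length = 2 ^ k →
      MkRoot ℓ h k X = MkRoot ℓ h k Y → X = Y := by
  intro k
  induction k with
  | zero =>
    intro X Y hX hY hE
    simp only [pow_zero, List.length_eq_one_iff] at hX hY
    obtain ⟨x, rfl⟩ := hX; obtain ⟨y, rfl⟩ := hY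
    simp [MkRoot] at hE
    simp [hℓ hE]
  | succ k ih =>
    intro X Y hX hY hE
    simp only [MkRoot] at hE
    obtain ⟨h1, h2⟩ := hh _ _ _ _ hE
    have hk : 2 ^ k ≤ 2 ^ (k + 1) := pow_le_pow_right₀ (by norm_num) (Nat.le_succ k)
    have e1 := ih (X.take (2 ^ k)) (Y.take (2 ^ k))
      (by simp [hX, Nat.min_eq_left hk]) (by simp [hY, Nat.min_eq_left hk]) h1
    have e2 := ih (X.drop (2 ^ k)) (Y.drop (2 ^ k))
      (by simp [hX, pow_succ]; omega) (by simp [hY, pow_succ]; omega) h2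
    calc X = X.take (2 ^ k) ++ X.drop (2 ^ k) := (List.take_append_drop _ _).symm
    _ = Y.take (2 ^ k) ++ Y.drop (2 ^ k) := by rw [e1, e2]
    _ = Y := List.take_append_drop _ _

lemma MkRoot_key [Inhabited α] (ℓ : α → β) (h : β → β → β)
    (hℓ : Function.Injective ℓ)
    (hh : ∀ b₁ b₂ b₁' b₂' : β, h b₁ b₂ = h b₁' b₂' → b₁ = b₁' ∧ b₂ = b₂') :
    ∀ n a (X : List α), X.length = 2 ^ a → ∀ (X' : List α), X'.length = 2 ^ (a + n) →
      ∀ S : List β, S.length = n →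
      S.foldl h (MkRoot ℓ h a X) = MkRoot ℓ h (a + n) X' → X = X'.take (2 ^ a) := by
  intro n
  induction n with
  | zero =>
    intro a X hX X' hX' S hS hE
    rw [List.length_eq_zero_iff.mp hS] at hE
    simp at hE hX'
    have := MkRoot_inj ℓ h hℓ hh a X X' hX hX' hE
    rw [this, List.take_of_length_le (le_of_eq hX')]
  | succ n ih =>
    intro a X hX X' hX' S hS hE
    have hSne : S ≠ [] := by intro hc; rw [hc] at hS; simp at hS
    obtain ⟨S₀, s, rfl⟩ : ∃ S₀ s, S = S₀ ++ [s] := ⟨S.dropLast, S.getLast hSne,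
      (List.dropLast_append_getLast hSne).symm⟩
    rw [List.foldl_append] at hE
    have hstep : a + (n + 1) = (a + n) + 1 := rfl
    rw [hstep] at hE hX'
    simp only [MkRoot, List.foldl_cons, List.foldl_nil] at hE
    obtain ⟨h1, _⟩ := hh _ _ _ _ hE
    have hle : 2 ^ (a + n) ≤ 2 ^ (a + n + 1) := pow_le_pow_right₀ (by norm_num) (Nat.le_succ _)
    have hS₀ : S₀.length = n := by
      have := hS; simp at this; omega
    have := ih a X hX (X'.take (2 ^ (a + n)))
      (by simp [hX', Nat.min_eq_left hle]) S₀ hS₀ h1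
    rw [this, List.take_take, Nat.min_eq_left (pow_le_pow_right₀ (by norm_num) (Nat.le_add_right a n))]

theorem history_tree_incremental_sound [Inhabited α] (ℓ : α → β) (h : β → β → β)
    (hℓ : Function.Injective ℓ)
    (hh : ∀ b₁ b₂ b₁' b₂' : β, h b₁ b₂ = h b₁' b₂' → b₁ = b₁' ∧ b₂ = b₂')
    (a b : ℕ) (hab : a ≤ b) (X X' : List α)
    (hX : X.length = 2 ^ a) (hX' : X'.length = 2 ^ b)
    (hS : ∃ S : List β, S.length = b - a ∧ S.foldl h (MkRoot ℓ h a X) = MkRoot ℓ h b X') :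
    X = X'.take (2 ^ a) ∧ X <+: X' := by
  obtain ⟨S, hSl, hE⟩ := hS
  have hb : b = a + (b - a) := by omega
  have := MkRoot_key ℓ h hℓ hh (b - a) a X hX X' (by rw [← hb]; exact hX') S hSl
    (by rw [← hb]; exact hE)
  exact ⟨this, this ▸ List.take_prefix _ _⟩
end

section
/- (Root update from an authentication path; correctness of the enclave's newLRoot/DeriveNewRoot mechanism, which extends the ledger by replacing the last leaf hash in an incremental-proof template) Let k : ℕ, let X : List α with X.length = 2^k, let i < 2^k, and let x' : α. Then Rec k i x' (MkProof k i X) = MkRoot k (X.set i x'); that is, reconstructing the root from the old authentication path of position i, but with the new element x' substituted at the leaf, yields exactly the Merkle root of the list X with its i-th element replaced by x'. -/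
variable {α β : Type*}

theorem merkle_root_update [Inhabited α] (ℓ : α → β) (h : β → β → β)
    (k : ℕ) (X : List α) (hX : X.length = 2 ^ k) (i : ℕ) (hi : i < 2 ^ k) (x' : α) :
    Rec ℓ h k i x' (MkProof ℓ h k i X) = MkRoot ℓ h k (X.set i x') := by
  induction k generalizing i X with
  | zero =>
    interval_cases i
    match X, hX with
    | [x], _ => rfl
  | succ k ih =>
    rw [MkProof, MkRoot]
    by_cases hc : i < 2 ^ k
    · rw [if_pos hc, Rec, if_pos hc, List.take_set,
        List.drop_set, if_pos (hc.trans_le (by simp)),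
        ih _ (by simp [hX, pow_succ]) _ hc]
    · rw [if_neg hc, Rec, if_neg hc, List.take_set,
        List.set_eq_of_length_le (by simp [hX]; omega),
        List.drop_set, if_neg (by omega),
        ih _ (by simp [hX, pow_succ]; omega) _ (by simp [pow_succ] at hi; omega)]
end

section
/- (Composed verifiability: a membership proof against an extended version of the ledger binds elements of the old version; core of the paper's verifiability theorem) Assume the hashing is collision-free. Let a ≤ b, let X : List α with X.length = 2^a, let X' : List α with X'.length = 2^b, and suppose there exists S : List β with S.length = b - a and S.foldl h (MkRoot a X) = MkRoot b X' (an incremental consistency proof from X to X'). Let i < 2^b, x : α, and π : List β with π.length = b satisfy Rec b i x π = MkRoot b X' (a membership proof against the new root). Then x = X'.get i, and moreover if i < 2^a then x = X.get i. -/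
variable {α β : Type*}

theorem rec_correct [Inhabited α] (ℓ : α → β) (h : β → β → β)
    (hℓ : Function.Injective ℓ)
    (hh : ∀ b₁ b₂ b₁' b₂' : β, h b₁ b₂ = h b₁' b₂' → b₁ = b₁' ∧ b₂ = b₂') :
    ∀ (k : ℕ) (i : ℕ) (x : α) (π : List β) (X : List α)
      (hX : X.length = 2 ^ k) (hπk : π.length = k) (hik : i < 2 ^ k),
      Rec ℓ h k i x π = MkRoot ℓ h k X → x = X[i]'(by omega) := by
  intro k
  induction k with
  | zero =>
    intro i x π X hX hπ hi hr
    interval_cases i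
    obtain ⟨y, rfl⟩ := List.length_eq_one_iff.mp hX
    simp [Rec, MkRoot] at hr ⊢
    exact hℓ hr
  | succ k ih =>
    intro i x π X hX hπ hi hr
    match π with
    | s :: π' =>
      simp only [List.length_cons, Nat.add_right_cancel_iff] at hπ
      have htl : (X.take (2 ^ k)).length = 2 ^ k := by
        simp [hX]; omega
      have hdl : (X.drop (2 ^ k)).length = 2 ^ k := by
        simp [hX]; ring_nf; omega
      by_cases hik : i < 2 ^ k
      · rw [Rec, if_pos hik, MkRoot] at hr
        have := (hh _ _ _ _ hr).1
        have hx := ih i x π' (X.take (2 ^ k)) htl hπ hik this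
        rw [hx]
        simp [List.getElem_take]
      · rw [Rec, if_neg hik, MkRoot] at hr
        have := (hh _ _ _ _ hr).2
        have hik' : i - 2 ^ k < 2 ^ k := by
          rw [pow_succ] at hi; omega
        have hx := ih (i - 2 ^ k) x π' (X.drop (2 ^ k)) hdl hπ hik' this
        rw [hx]
        rw [List.getElem_drop]
        congr 1
        omega

theorem mkroot_inj [Inhabited α] (ℓ : α → β) (h : β → β → β)
    (hℓ : Function.Injective ℓ)
    (hh : ∀ b₁ b₂ b₁' b₂' : β, h b₁ b₂ = h b₁' b₂' → b₁ = b₁' ∧ b₂ = b₂') :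
    ∀ (k : ℕ) (X Y : List α), X.length = 2 ^ k → Y.length = 2 ^ k →
      MkRoot ℓ h k X = MkRoot ℓ h k Y → X = Y := by
  intro k
  induction k with
  | zero =>
    intro X Y hX hY hr
    obtain ⟨x, rfl⟩ := List.length_eq_one_iff.mp hX
    obtain ⟨y, rfl⟩ := List.length_eq_one_iff.mp hY
    simp [MkRoot] at hr
    rw [hℓ hr]
  | succ k ih =>
    intro X Y hX hY hr
    rw [MkRoot, MkRoot] at hr
    have h1 := (hh _ _ _ _ hr).1
    have h2 := (hh _ _ _ _ hr).2
    have e1 := ih _ _ (by simp [hX]; omega) (by simp [hY]; omega) h1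
    have e2 := ih _ _ (by simp [hX]; ring_nf; omega) (by simp [hY]; ring_nf; omega) h2
    calc X = X.take (2 ^ k) ++ X.drop (2 ^ k) := (List.take_append_drop _ _).symm
      _ = Y.take (2 ^ k) ++ Y.drop (2 ^ k) := by rw [e1, e2]
      _ = Y := List.take_append_drop _ _

theorem fold_prefix [Inhabited α] (ℓ : α → β) (h : β → β → β)
    (hh : ∀ b₁ b₂ b₁' b₂' : β, h b₁ b₂ = h b₁' b₂' → b₁ = b₁' ∧ b₂ = b₂') (a : ℕ) :
    ∀ (d : ℕ) (S : List β) (r : β) (X' : List α), X'.length = 2 ^ (a + d) →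
      S.length = d → S.foldl h r = MkRoot ℓ h (a + d) X' →
      r = MkRoot ℓ h a (X'.take (2 ^ a)) := by
  intro d
  induction d with
  | zero =>
    intro S r X' hX' hS hf
    obtain rfl : S = [] := List.length_eq_zero_iff.mp hS
    simp at hf
    simp only [Nat.add_zero] at hX'
    rw [hf, List.take_of_length_le (by omega)]
  | succ d ih =>
    intro S r X' hX' hS hf
    rcases S.eq_nil_or_concat with rfl | ⟨S', t, rfl⟩
    · simp at hS
    · simp only [List.concat_eq_append, List.foldl_append, List.foldl_cons,
        List.foldl_nil] at hf
      rw [show a + (d + 1) = (a + d) + 1 from rfl, MkRoot] at hf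
      have h1 := (hh _ _ _ _ hf).1
      have := ih S' r (X'.take (2 ^ (a + d)))
        (by simp [hX']; exact Nat.pow_le_pow_right (by norm_num) (by omega))
        (by simpa using hS) h1
      rwa [List.take_take, min_eq_left (Nat.pow_le_pow_right (by norm_num) (by omega))] at this

theorem composed_verifiability [Inhabited α] (ℓ : α → β) (h : β → β → β)
    (hℓ : Function.Injective ℓ)
    (hh : ∀ b₁ b₂ b₁' b₂' : β, h b₁ b₂ = h b₁' b₂' → b₁ = b₁' ∧ b₂ = b₂')
    (a b : ℕ) (hab : a ≤ b) (X X' : List α)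
    (hX : X.length = 2 ^ a) (hX' : X'.length = 2 ^ b)
    (hS : ∃ S : List β, S.length = b - a ∧ S.foldl h (MkRoot ℓ h a X) = MkRoot ℓ h b X')
    (i : ℕ) (hi : i < 2 ^ b) (x : α) (π : List β) (hπ : π.length = b)
    (hver : Rec ℓ h b i x π = MkRoot ℓ h b X') :
    x = X'.get ⟨i, by omega⟩ ∧ (∀ hia : i < 2 ^ a, x = X.get ⟨i, by omega⟩) := by
  have hx' : x = X'[i]'(by omega) :=
    rec_correct ℓ h hℓ hh b i x π X' hX' hπ hi hver
  obtain ⟨S, hSl, hSf⟩ := hS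
  have hroot := fold_prefix ℓ h hh a (b - a) S (MkRoot ℓ h a X) X'
    (by rw [Nat.add_sub_cancel' hab]; exact hX') hSl
    (by rw [Nat.add_sub_cancel' hab]; exact hSf)
  have hXeq : X = X'.take (2 ^ a) :=
    mkroot_inj ℓ h hℓ hh a _ _ hX
      (by simp [hX']; exact Nat.pow_le_pow_right (by norm_num) hab) hroot
  refine ⟨hx', fun hia => ?_⟩
  subst hXeq
  simp only [List.get_eq_getElem, List.getElem_take]
  exact hx'
end

section
/- (Version separation of Merkle roots) Assume the hashing is collision-free and additionally that the range of ℓ is disjoint from the range of h (for all x : α and b₁ b₂ : β, ℓ x ≠ h b₁ b₂). Then for all natural numbers a ≠ b and all lists X, Y : List α with X.length = 2^a and Y.length = 2^b, MkRoot a X ≠ MkRoot b Y; that is, Merkle roots of trees of different depths never collide. -/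
variable {α β : Type*}

theorem merkle_version_separation [Inhabited α] (ℓ : α → β) (h : β → β → β)
    (hℓ : Function.Injective ℓ)
    (hh : ∀ b₁ b₂ b₁' b₂' : β, h b₁ b₂ = h b₁' b₂' → b₁ = b₁' ∧ b₂ = b₂')
    (hdisj : ∀ (x : α) (b₁ b₂ : β), ℓ x ≠ h b₁ b₂)
    (a b : ℕ) (hab : a ≠ b) (X Y : List α)
    (hX : X.length = 2 ^ a) (hY : Y.length = 2 ^ b) :
    MkRoot ℓ h a X ≠ MkRoot ℓ h b Y := by
  clear hX hY
  induction a generalizing b X Y with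
  | zero =>
    cases b with
    | zero => exact absurd rfl hab
    | succ b => exact hdisj _ _ _
  | succ a ih =>
    cases b with
    | zero => exact fun he => hdisj _ _ _ he.symm
    | succ b =>
      intro he
      exact ih b (by omega) _ _ (hh _ _ _ _ he).1
end

section
/- (Hash-chain binding; tamper evidence of chained block headers) Assume the chain hashing is collision-free. Then for all lists X, Y : List α, if ChainHead X = ChainHead Y then X = Y; in particular, the head of the hash chain uniquely determines the entire record history, without any assumption that X and Y have equal lengths. -/
variable {α β : Type*}

/-- Head of a hash chain with step function `h` and seed `c₀`. -/
def ChainHead (h : β → α → β) (c₀ : β) (X : List α) : β := X.foldl h c₀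

theorem hash_chain_binding (h : β → α → β) (c₀ : β)
    (hh : ∀ (c c' : β) (x x' : α), h c x = h c' x' → c = c' ∧ x = x')
    (hseed : ∀ (c : β) (x : α), h c x ≠ c₀)
    (X Y : List α) (heq : ChainHead h c₀ X = ChainHead h c₀ Y) : X = Y := by
  induction X using List.reverseRecOn generalizing Y with
  | nil =>
    induction Y using List.reverseRecOn with
    | nil => rfl
    | append_singleton ys y _ =>
      exact absurd heq.symm (by simpa [ChainHead] using hseed (ChainHead h c₀ ys) y)
  | append_singleton xs x ih =>
    induction Y using List.reverseRecOn with
    | nil =>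
      exact absurd heq (by simpa [ChainHead] using hseed (ChainHead h c₀ xs) x)
    | append_singleton ys y _ =>
      simp only [ChainHead, List.foldl_append, List.foldl_cons, List.foldl_nil] at heq
      obtain ⟨h1, h2⟩ := hh _ _ _ _ heq
      rw [ih ys h1, h2]
end

section
/- (Hash-chain consistency: matching an intermediate chain value forces a prefix) Assume the chain hashing is collision-free. Then for all lists X, Y : List α, if ChainHead X is an element of the list of intermediate chain values List.scanl h c₀ Y, then X is a prefix of Y (X <+: Y). -/
variable {α β : Type*}

private lemma mem_scanl_exists (h : β → α → β) :
    ∀ (Y : List α) (c a : β), a ∈ List.scanl h c Y →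
      ∃ P : List α, P <+: Y ∧ a = P.foldl h c := by
  intro Y
  induction Y with
  | nil =>
    intro c a ha
    simp at ha
    exact ⟨[], List.prefix_refl _, by simp [ha]⟩
  | cons y Y ih =>
    intro c a ha
    rw [List.scanl_cons, List.mem_cons] at ha
    rcases ha with rfl | ha
    · exact ⟨[], List.nil_prefix, by simp⟩
    · obtain ⟨P, hP, rfl⟩ := ih (h c y) a ha
      exact ⟨y :: P, List.cons_prefix_cons.mpr ⟨rfl, hP⟩, by simp⟩

private lemma foldl_inj (h : β → α → β) (c₀ : β)
    (hh : ∀ (c c' : β) (x x' : α), h c x = h c' x' → c = c' ∧ x = x')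
    (hseed : ∀ (c : β) (x : α), h c x ≠ c₀) :
    ∀ (X Z : List α), X.foldl h c₀ = Z.foldl h c₀ → X = Z := by
  intro X
  induction X using List.reverseRecOn with
  | nil =>
    intro Z
    induction Z using List.reverseRecOn with
    | nil => intro _; rfl
    | append_singleton Z z _ =>
      intro hZ
      simp [List.foldl_append] at hZ
      exact absurd hZ.symm (hseed _ _)
  | append_singleton X x ihX =>
    intro Z
    induction Z using List.reverseRecOn with
    | nil =>
      intro hZ
      simp [List.foldl_append] at hZ
      exact absurd hZ (hseed _ _)
    | append_singleton Z z _ =>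
      intro hZ
      simp only [List.foldl_append, List.foldl_cons, List.foldl_nil] at hZ
      obtain ⟨h1, h2⟩ := hh _ _ _ _ hZ
      rw [ihX Z h1, h2]

theorem hash_chain_prefix (h : β → α → β) (c₀ : β)
    (hh : ∀ (c c' : β) (x x' : α), h c x = h c' x' → c = c' ∧ x = x')
    (hseed : ∀ (c : β) (x : α), h c x ≠ c₀)
    (X Y : List α) (hmem : ChainHead h c₀ X ∈ List.scanl h c₀ Y) : X <+: Y := by
  obtain ⟨P, hP, hfold⟩ := mem_scanl_exists h Y c₀ _ hmem
  rwa [foldl_inj h c₀ hh hseed X P hfold]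
end

section
/- (Soundness of trie inclusion and exclusion proofs; if a path of sibling digests along a key verifies a claimed value against the trie root, the map really assigns that value to the key) For every k : ℕ, every key-value map f : (Fin k → Bool) → Option α, every key : Fin k → Bool, every v : Option α, and every π : List β with π.length = k, if RecT k key v π = TrieRoot k f, then f key = v. In particular, taking v = some x yields soundness of inclusion proofs, and taking v = none yields soundness of exclusion (negative) proofs. -/
variable {α β : Type*}

/-- Root of an authenticated binary trie over keys `Fin k → Bool`. -/
def TrieRoot (ℓ : Option α → β) (h : β → β → β) : (k : ℕ) → ((Fin k → Bool) → Option α) → β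
  | 0, f => ℓ (f (fun i => i.elim0))
  | k + 1, f =>
    h (TrieRoot ℓ h k (fun v => f (Fin.cons false v)))
      (TrieRoot ℓ h k (fun v => f (Fin.cons true v)))

/-- Root reconstruction along a key from sibling digests, listed from the
root level down (junk value on ill-formed input). -/
def RecT (ℓ : Option α → β) (h : β → β → β) : (k : ℕ) → (Fin k → Bool) → Option α → List β → β
  | 0, _, v, _ => ℓ v
  | _ + 1, _, v, [] => ℓ v
  | k + 1, key, v, s :: π =>
    if key 0 = false then h (RecT ℓ h k (fun i => key i.succ) v π) s
    else h s (RecT ℓ h k (fun i => key i.succ) v π)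

theorem trie_proof_sound (ℓ : Option α → β) (h : β → β → β)
    (hℓ : Function.Injective ℓ)
    (hh : ∀ b₁ b₂ b₁' b₂' : β, h b₁ b₂ = h b₁' b₂' → b₁ = b₁' ∧ b₂ = b₂')
    (k : ℕ) (f : (Fin k → Bool) → Option α) (key : Fin k → Bool)
    (v : Option α) (π : List β) (hπ : π.length = k)
    (hver : RecT ℓ h k key v π = TrieRoot ℓ h k f) : f key = v := by
  induction k generalizing π with
  | zero =>
    have : f (fun i => i.elim0) = v := (hℓ (by simpa [RecT, TrieRoot] using hver)).symm
    have hk : key = fun i => i.elim0 := funext fun i => i.elim0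
    rw [hk]; exact this
  | succ k ih =>
    obtain ⟨s, π, rfl⟩ : ∃ s π', π = s :: π' := by
      cases π with
      | nil => simp at hπ
      | cons a l => exact ⟨a, l, rfl⟩
    have hπ' : π.length = k := by simpa using hπ
    have hkey : key = Fin.cons (key 0) (fun i => key i.succ) := by
      funext i
      refine Fin.cases ?_ ?_ i <;> simp
    cases hb : key 0 with
    | false =>
      rw [RecT, if_pos hb, TrieRoot] at hver
      have := (hh _ _ _ _ hver).1
      have := ih (fun v => f (Fin.cons false v)) (fun i => key i.succ) π hπ' this
      rw [hkey, hb]; exact this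
    | true =>
      rw [RecT, if_neg (by simp [hb]), TrieRoot] at hver
      have := (hh _ _ _ _ hver).2
      have := ih (fun v => f (Fin.cons true v)) (fun i => key i.succ) π hπ' this
      rw [hkey, hb]; exact this
end

section
/- (Completeness of trie inclusion and exclusion proofs) For every k : ℕ, every key-value map f : (Fin k → Bool) → Option α, and every key : Fin k → Bool, there exists a list π : List β with π.length = k such that RecT k key (f key) π = TrieRoot k f; that is, every key admits a proof of length k of its (possibly absent) value against the trie root. -/
variable {α β : Type*}

theorem trie_proof_complete (ℓ : Option α → β) (h : β → β → β)
    (hℓ : Function.Injective ℓ)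
    (hh : ∀ b₁ b₂ b₁' b₂' : β, h b₁ b₂ = h b₁' b₂' → b₁ = b₁' ∧ b₂ = b₂')
    (k : ℕ) (f : (Fin k → Bool) → Option α) (key : Fin k → Bool) :
    ∃ π : List β, π.length = k ∧ RecT ℓ h k key (f key) π = TrieRoot ℓ h k f := by
  induction k with
  | zero =>
    refine ⟨[], rfl, ?_⟩
    have : key = fun i => i.elim0 := funext fun i => i.elim0
    simp [RecT, TrieRoot, this]
  | succ k ih =>
    have hkey : Fin.cons (key 0) (fun i => key i.succ) = key :=
      funext fun i => Fin.cases rfl (fun j => rfl) i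
    cases hb : key 0 with
    | false =>
      obtain ⟨π, hπ, hrec⟩ := ih (fun v => f (Fin.cons false v)) (fun i => key i.succ)
      refine ⟨(TrieRoot ℓ h k (fun v => f (Fin.cons true v))) :: π, by simp [hπ], ?_⟩
      have hf : f (Fin.cons false fun i => key i.succ) = f key := by
        rw [← hb, hkey]
      simp only [RecT, hb, TrieRoot, if_true, reduceIte]
      rw [← hf, hrec]
    | true =>
      obtain ⟨π, hπ, hrec⟩ := ih (fun v => f (Fin.cons true v)) (fun i => key i.succ)
      refine ⟨(TrieRoot ℓ h k (fun v => f (Fin.cons false v))) :: π, by simp [hπ], ?_⟩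
      have hf : f (Fin.cons true fun i => key i.succ) = f key := by
        rw [← hb, hkey]
      simp only [RecT, hb, TrieRoot, reduceIte, Bool.true_eq_false, if_false]
      rw [← hf, hrec]
end
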